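/- Let G be a finite connected simple graph with at least two vertices, and let Y be the set of vertices of G of degree at most 2. Suppose that every vertex of Y has at least one neighbor of degree at least 3, and that every vertex of Y of degree exactly 2 has its two neighbors adjacent to each other. Then |Y| ≤ ml(G); in particular, G has a spanning tree in which every vertex of Y is a leaf. -/

import Mathlib

open SimpleGraph

variable {V : Type*}

/-- The number of leaves (degree-1 vertices) of a graph. -/
noncomputable def numLeaves (T : SimpleGraph V) : ℕ :=
  {v | (T.neighborSet v).ncard = 1}.ncard

/-- The max-leaf number of `G`: the maximum number of leaves over all spanning trees of `G`
(a spanning tree is a subgraph of `G` on the full vertex set that is a tree). -/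
noncomputable def ml (G : SimpleGraph V) : ℕ :=
  sSup {n | ∃ T : SimpleGraph V, T ≤ G ∧ T.IsTree ∧ n = numLeaves T}




lemma conn_delete {G : SimpleGraph V} {v w : V} (hG : G.Connected)
    (h : (G \ fromEdgeSet {s(v, w)}).Reachable v w) :
    (G \ fromEdgeSet {s(v, w)}).Connected := by
  have hne : Nonempty V := hG.nonempty
  refine ⟨fun a b => ?_⟩
  obtain ⟨p⟩ := hG.preconnected a b
  induction p with
  | nil => exact Reachable.refl _
  | @cons a x b hadj q ih =>
    refine Reachable.trans ?_ ih
    by_cases he : s(a, x) = s(v, w)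
    · rw [Sym2.eq_iff] at he
      rcases he with ⟨rfl, rfl⟩ | ⟨rfl, rfl⟩
      · exact h
      · exact h.symm
    · exact Adj.reachable (by simp [hadj, he])

lemma exists_tree [Fintype V] {G : SimpleGraph V} (hG : G.Connected) :
    ∃ T ≤ G, T.IsTree := by
  classical
  generalize hn : G.edgeSet.ncard = n
  induction n using Nat.strong_induction_on generalizing G with
  | _ n ih =>
  by_cases hac : G.IsAcyclic
  · exact ⟨G, le_refl _, hG, hac⟩
  · simp only [IsAcyclic, not_forall, not_not] at hac
    obtain ⟨v, c, hc⟩ := hac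
    cases c with
    | nil => exact absurd hc (by simp [Walk.isCycle_def])
    | @cons _ x _ hadj p =>
      have hmem : s(v, x) ∈ (Walk.cons hadj p).edges := by simp
      have hreach : (G \ fromEdgeSet {s(v, x)}).Reachable v x :=
        (adj_and_reachable_delete_edges_iff_exists_cycle.2 ⟨v, _, hc, hmem⟩).2
      have hconn := conn_delete hG hreach
      have hE : (G \ fromEdgeSet {s(v, x)}).edgeSet = G.edgeSet \ {s(v, x)} := by
        rw [edgeSet_sdiff, edgeSet_fromEdgeSet, edgeSet_sdiff_sdiff_isDiag]
      have hlt : (G \ fromEdgeSet {s(v, x)}).edgeSet.ncard < n := by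
        rw [hE, ← hn]
        exact Set.ncard_diff_singleton_lt_of_mem hadj (Set.toFinite _)
      obtain ⟨T, hT, hTt⟩ := ih _ hlt hconn rfl
      exact ⟨T, hT.trans (by simp), hTt⟩



lemma tree_ncard [Fintype V] {T : SimpleGraph V} (h : T.IsTree) :
    T.edgeSet.ncard + 1 = Fintype.card V := by
  classical
  have := h.card_edgeFinset
  rwa [Set.ncard_eq_toFinset_card' T.edgeSet]

lemma isTree_of_conn_card [Fintype V] {T : SimpleGraph V} (hc : T.Connected)
    (hn : T.edgeSet.ncard + 1 = Fintype.card V) : T.IsTree := by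
  classical
  refine ⟨hc, ?_⟩
  by_contra hac
  simp only [SimpleGraph.IsAcyclic, not_forall, not_not] at hac
  obtain ⟨v, c, hcy⟩ := hac
  cases c with
  | nil => exact absurd hcy (by simp [Walk.isCycle_def])
  | @cons _ x _ hadj p =>
    have hmem : s(v, x) ∈ (Walk.cons hadj p).edges := by simp
    have hreach : (T \ fromEdgeSet {s(v, x)}).Reachable v x :=
      (adj_and_reachable_delete_edges_iff_exists_cycle.2 ⟨v, _, hcy, hmem⟩).2
    have hconn := conn_delete hc hreach
    obtain ⟨T₀, hT₀, hT₀t⟩ := exists_tree hconn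
    have hE : (T \ fromEdgeSet {s(v, x)}).edgeSet = T.edgeSet \ {s(v, x)} := by
      rw [edgeSet_sdiff, edgeSet_fromEdgeSet, edgeSet_sdiff_sdiff_isDiag]
    have hsub : T₀.edgeSet ⊆ T.edgeSet \ {s(v, x)} := hE ▸ edgeSet_mono hT₀
    have hlt : T₀.edgeSet.ncard < T.edgeSet.ncard :=
      lt_of_le_of_lt (Set.ncard_le_ncard hsub (Set.toFinite _))
        (Set.ncard_diff_singleton_lt_of_mem hadj (Set.toFinite _))
    have := tree_ncard hT₀t
    omega



lemma reach_induce {G : SimpleGraph V} {S : Set V}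
    (htri : ∀ x ∉ S, ∀ u ∈ G.neighborSet x, ∀ z ∈ G.neighborSet x, u ≠ z → G.Adj u z) :
    ∀ (n : ℕ) (u v : V) (hu : u ∈ S) (hv : v ∈ S) (w : G.Walk u v), w.length ≤ n →
      (G.induce S).Reachable ⟨u, hu⟩ ⟨v, hv⟩ := by
  intro n
  induction n with
  | zero =>
    intro u v hu hv w hw
    cases w with
    | nil => exact Reachable.refl _
    | cons h p => simp at hw
  | succ n ih =>
    intro u v hu hv w hw
    cases w with
    | nil => exact Reachable.refl _
    | @cons _ x _ h p =>
      by_cases hx : x ∈ S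
      · have h1 : (G.induce S).Adj ⟨u, hu⟩ ⟨x, hx⟩ := by simpa using h
        exact h1.reachable.trans (ih x v hx hv p (by
          simp only [Walk.length_cons] at hw; omega))
      · have hxv : x ≠ v := fun e => hx (e ▸ hv)
        cases p with
        | nil => exact absurd rfl hxv
        | @cons _ z _ h2 q =>
          by_cases hz : z = u
          · subst hz
            exact ih z v hu hv q (by simp only [Walk.length_cons] at hw; omega)
          · have hadj : G.Adj u z :=
              htri x hx u h.symm z h2 (fun e => hz e.symm)
            exact ih u v hu hv (Walk.cons hadj q)
              (by simp only [Walk.length_cons] at hw ⊢; omega)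
theorem card_lowDegree_le_ml [Fintype V] (G : SimpleGraph V) (hG : G.Connected)
    (hcard : 1 < Fintype.card V) (Y : Set V)
    (hY : Y = {v | (G.neighborSet v).ncard ≤ 2})
    (hnbr : ∀ y ∈ Y, ∃ u ∈ G.neighborSet y, 3 ≤ (G.neighborSet u).ncard)
    (htri : ∀ y ∈ Y, (G.neighborSet y).ncard = 2 →
      ∀ u ∈ G.neighborSet y, ∀ v ∈ G.neighborSet y, u ≠ v → G.Adj u v) :
    Y.ncard ≤ ml G ∧
      ∃ T : SimpleGraph V, T ≤ G ∧ T.IsTree ∧ ∀ y ∈ Y, (T.neighborSet y).ncard = 1 := by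
  classical
  set S : Set V := Yᶜ with hS
  have hYS : ∀ {v : V}, v ∈ Y → v ∉ S := fun hv hvS => hvS hv
  have hSY : ∀ {v : V}, v ∉ S → v ∈ Y := fun hv => not_not.1 hv
  have hdegS : ∀ {v : V}, 3 ≤ (G.neighborSet v).ncard → v ∈ S := by
    intro v h hvY
    rw [hY, Set.mem_setOf_eq] at hvY
    omega
  -- choice of a high-degree neighbor for each vertex of Y
  have hch : ∀ y, y ∈ Y → ∃ u, u ∈ G.neighborSet y ∧ 3 ≤ (G.neighborSet u).ncard := by
    simpa using hnbr
  set f : V → V := fun y => if h : y ∈ Y then (hch y h).choose else y with hf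
  have hfadj : ∀ y ∈ Y, G.Adj y (f y) := by
    intro y hy
    simp only [hf, dif_pos hy]
    exact (hch y hy).choose_spec.1
  have hfS : ∀ y ∈ Y, f y ∈ S := by
    intro y hy
    refine hdegS ?_
    simp only [hf, dif_pos hy]
    exact (hch y hy).choose_spec.2
  -- the combined triangle condition
  have htri' : ∀ x ∉ S, ∀ u ∈ G.neighborSet x, ∀ z ∈ G.neighborSet x, u ≠ z → G.Adj u z := by
    intro x hx u hu z hz hne
    have hxY : x ∈ Y := hSY hx
    have h2le : ({u, z} : Set V) ⊆ G.neighborSet x := by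
      simp only [Set.insert_subset_iff, Set.singleton_subset_iff]
      exact ⟨hu, hz⟩
    have hcard2 : (G.neighborSet x).ncard = 2 := by
      have hle := Set.ncard_le_ncard h2le (Set.toFinite _)
      rw [Set.ncard_pair hne] at hle
      have hx2 : (G.neighborSet x).ncard ≤ 2 := by rw [hY] at hxY; exact hxY
      omega
    exact htri x hxY hcard2 u hu z hz hne
  -- S is nonempty
  have hSne : S.Nonempty := by
    have : Nonempty V := Fintype.card_pos_iff.1 (by omega)
    obtain ⟨v⟩ := this
    by_cases hv : v ∈ S
    · exact ⟨v, hv⟩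
    · exact ⟨f v, hfS v (hSY hv)⟩
  -- the induced graph on S is connected
  have hIconn : (G.induce S).Connected := by
    have : Nonempty ↥S := hSne.to_subtype
    refine ⟨fun a b => ?_⟩
    obtain ⟨w⟩ := hG.preconnected (a : V) (b : V)
    have := reach_induce htri' w.length (a : V) (b : V) a.2 b.2 w le_rfl
    simpa using this
  obtain ⟨T', hT'le, hT't⟩ := exists_tree hIconn
  -- build the spanning tree T of G
  set T : SimpleGraph V :=
    { Adj := fun a b => (∃ (ha : a ∈ S) (hb : b ∈ S), T'.Adj ⟨a, ha⟩ ⟨b, hb⟩) ∨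
        (a ∈ Y ∧ b = f a) ∨ (b ∈ Y ∧ a = f b)
      symm := by
        constructor
        rintro a b (⟨ha, hb, h⟩ | h | h)
        · exact Or.inl ⟨hb, ha, h.symm⟩
        · exact Or.inr (Or.inr h)
        · exact Or.inr (Or.inl h)
      loopless := by
        constructor
        rintro a (⟨ha, _, h⟩ | ⟨ha, h⟩ | ⟨ha, h⟩) <;>
          first
          | exact T'.loopless.irrefl _ h
          | exact (hfadj a ha).ne' (h ▸ rfl) } with hT
  have hTadj : ∀ {a b : V}, T.Adj a b ↔
      ((∃ (ha : a ∈ S) (hb : b ∈ S), T'.Adj ⟨a, ha⟩ ⟨b, hb⟩) ∨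
        (a ∈ Y ∧ b = f a) ∨ (b ∈ Y ∧ a = f b)) := fun {a b} => Iff.rfl
  have hTle : T ≤ G := by
    rintro a b (⟨ha, hb, h⟩ | ⟨ha, rfl⟩ | ⟨hb, rfl⟩)
    · have := hT'le h
      simpa using this
    · exact hfadj a ha
    · exact (hfadj b hb).symm
  -- each y ∈ Y is a leaf of T
  have hTnbr : ∀ y ∈ Y, T.neighborSet y = {f y} := by
    intro y hy
    ext b
    simp only [mem_neighborSet, Set.mem_singleton_iff]
    constructor
    · rintro (⟨ha, _, _⟩ | ⟨_, rfl⟩ | ⟨hb, rfl⟩)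
      · exact absurd ha (hYS hy)
      · rfl
      · exact absurd (hfS b hb) (hYS hy)
    · rintro rfl
      exact Or.inr (Or.inl ⟨hy, rfl⟩)
  have hleaf : ∀ y ∈ Y, (T.neighborSet y).ncard = 1 := by
    intro y hy
    rw [hTnbr y hy, Set.ncard_singleton]
  -- T is connected
  have hTconn : T.Connected := by
    have hne : Nonempty V := Fintype.card_pos_iff.1 (by omega)
    let φ : T' →g T := ⟨Subtype.val, by
      rintro ⟨a, ha⟩ ⟨b, hb⟩ h
      exact Or.inl ⟨ha, hb, h⟩⟩
    have hreachS : ∀ a b : ↥S, T.Reachable ↑a ↑b := by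
      intro a b
      have := (hT't.isConnected.preconnected a b).map φ
      exact this
    have hstep : ∀ v : V, ∃ s : ↥S, T.Reachable v ↑s := by
      intro v
      by_cases hv : v ∈ S
      · exact ⟨⟨v, hv⟩, Reachable.refl _⟩
      · refine ⟨⟨f v, hfS v (hSY hv)⟩, Adj.reachable ?_⟩
        exact Or.inr (Or.inl ⟨hSY hv, rfl⟩)
    refine ⟨fun a b => ?_⟩
    obtain ⟨sa, ha⟩ := hstep a
    obtain ⟨sb, hb⟩ := hstep b
    exact ha.trans ((hreachS sa sb).trans hb.symm)
  -- edge set decomposition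
  have hedge : T.edgeSet =
      (Sym2.map (Subtype.val : ↥S → V) '' T'.edgeSet) ∪ ((fun y => s(y, f y)) '' Y) := by
    ext e
    induction e using Sym2.ind with
    | _ a b =>
      rw [mem_edgeSet]
      constructor
      · rintro (⟨ha, hb, h⟩ | ⟨ha, rfl⟩ | ⟨hb, rfl⟩)
        · exact Or.inl ⟨s(⟨a, ha⟩, ⟨b, hb⟩), h, by simp⟩
        · exact Or.inr ⟨a, ha, rfl⟩
        · exact Or.inr ⟨b, hb, by rw [Sym2.eq_swap]⟩
      · rintro (⟨e', he', hmap⟩ | ⟨y, hy, hmap⟩)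
        · induction e' using Sym2.ind with
          | _ x z =>
            rw [Sym2.map_pair_eq, Sym2.eq_iff] at hmap
            rcases hmap with ⟨rfl, rfl⟩ | ⟨rfl, rfl⟩
            · exact Or.inl ⟨x.2, z.2, by simpa using he'⟩
            · exact Or.inl ⟨z.2, x.2, by simpa using (mem_edgeSet _).1 he'|>.symm⟩
        · rw [Sym2.eq_iff] at hmap
          rcases hmap with ⟨rfl, rfl⟩ | ⟨rfl, rfl⟩
          · exact Or.inr (Or.inl ⟨hy, rfl⟩)
          · exact Or.inr (Or.inr ⟨hy, rfl⟩)
  -- cardinality computation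
  have hc1 : (Sym2.map (Subtype.val : ↥S → V) '' T'.edgeSet).ncard = T'.edgeSet.ncard :=
    Set.ncard_image_of_injective _ (Sym2.map.injective Subtype.val_injective)
  have hc2 : ((fun y => s(y, f y)) '' Y).ncard = Y.ncard := by
    refine Set.ncard_image_of_injOn ?_
    intro y1 h1 y2 h2 he
    rw [Sym2.eq_iff] at he
    rcases he with ⟨rfl, -⟩ | ⟨h3, h4⟩
    · rfl
    · exact absurd (show y1 ∈ S by rw [h3]; exact hfS y2 h2) (hYS h1)
  have hdisj : Disjoint (Sym2.map (Subtype.val : ↥S → V) '' T'.edgeSet)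
      ((fun y => s(y, f y)) '' Y) := by
    rw [Set.disjoint_left]
    rintro e ⟨e', he', rfl⟩ ⟨y, hy, hmap⟩
    induction e' using Sym2.ind with
    | _ x z =>
      rw [Sym2.map_pair_eq, Sym2.eq_iff] at hmap
      rcases hmap with ⟨h1, -⟩ | ⟨h1, -⟩
      · exact hYS hy (show y ∈ S by rw [h1]; exact x.2)
      · exact hYS hy (show y ∈ S by rw [h1]; exact z.2)
  have hcount : T.edgeSet.ncard + 1 = Fintype.card V := by
    have hT'count : T'.edgeSet.ncard + 1 = S.ncard := by
      have := tree_ncard hT't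
      rwa [Fintype.card_eq_nat_card, Nat.card_coe_set_eq] at this
    have hSY' : S.ncard + Y.ncard = Fintype.card V := by
      have := Set.ncard_add_ncard_compl Y (Set.toFinite _) (Set.toFinite _)
      rw [← hS] at this
      rw [← Fintype.card_eq_nat_card] at this
      omega
    rw [hedge, Set.ncard_union_eq hdisj (Set.toFinite _) (Set.toFinite _), hc1, hc2]
    omega
  have hTtree : T.IsTree := isTree_of_conn_card hTconn hcount
  -- conclusion
  have h1 : Y.ncard ≤ numLeaves T :=
    Set.ncard_le_ncard (fun y hy => hleaf y hy) (Set.toFinite _)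
  have h2 : numLeaves T ≤ ml G := by
    refine le_csSup ⟨Fintype.card V, ?_⟩ ⟨T, hTle, hTtree, rfl⟩
    rintro n ⟨T₀, -, -, rfl⟩
    calc numLeaves T₀ ≤ (Set.univ : Set V).ncard :=
          Set.ncard_le_ncard (Set.subset_univ _) (Set.toFinite _)
      _ = Fintype.card V := by rw [Set.ncard_univ, Nat.card_eq_fintype_card]
  exact ⟨h1.trans h2, T, hTle, hTtree, hleaf⟩
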